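/- Let X and Z be independent random vectors in ℝⁿ with Z standard Gaussian, and let a, b > 0. If Y = a·X + b·Z, then for the map S(y) = E[X | Y = y], the score of the density p_Y of Y satisfies ∇ log p_Y(y) = (a·S(y) − y)/b² whenever X has a density. -/

import Mathlib

open Real MeasureTheory

/-- Helper bound: `t * exp(-t²/(2b²)) ≤ 2b` for `t ≥ 0`. -/
lemma tweedie_exp_mul_le {b : ℝ} (hb : 0 < b) {t : ℝ} (ht : 0 ≤ t) :
    Real.exp (-t ^ 2 / (2 * b ^ 2)) * t ≤ 2 * b := by
  rcases le_or_gt t (2 * b) with h | h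
  · have h1 : Real.exp (-t ^ 2 / (2 * b ^ 2)) ≤ 1 := by
      apply Real.exp_le_one_iff.2
      have h2 : -t ^ 2 / (2 * b ^ 2) = -(t ^ 2 / (2 * b ^ 2)) := by ring
      have : 0 ≤ t ^ 2 / (2 * b ^ 2) := by positivity
      linarith
    calc Real.exp (-t ^ 2 / (2 * b ^ 2)) * t ≤ 1 * t := by
          apply mul_le_mul_of_nonneg_right h1 ht
      _ ≤ 2 * b := by linarith
  · have ht0 : 0 < t := lt_trans (by positivity) h
    have hu : 0 < t ^ 2 / (2 * b ^ 2) := by positivity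
    have h1 : Real.exp (-t ^ 2 / (2 * b ^ 2)) ≤ (t ^ 2 / (2 * b ^ 2))⁻¹ := by
      rw [neg_div, Real.exp_neg]
      exact inv_anti₀ hu ((Real.add_one_le_exp _).trans' (by linarith))
    calc Real.exp (-t ^ 2 / (2 * b ^ 2)) * t ≤ (t ^ 2 / (2 * b ^ 2))⁻¹ * t := by
          apply mul_le_mul_of_nonneg_right h1 ht
      _ = 2 * b ^ 2 / t := by field_simp
      _ ≤ 2 * b := by
          rw [div_le_iff₀ ht0]
          nlinarith

set_option maxHeartbeats 1000000 in
set_option synthInstance.maxHeartbeats 400000 in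
/-- Tweedie's formula.  Let `X` have density `pX` on `ℝⁿ`, let `Z` be an
independent standard Gaussian and `Y = a·X + b·Z` with `a, b > 0`.  Then `Y`
has density `pY(y) = ∫ pX(x)·N(y; a x, b² I) dx`, the posterior mean
(denoiser) is `S(y) = E[X | Y = y] = (∫ pX(x)·N(y; a x, b² I)·x dx)/pY(y)`,
and the score of `pY` satisfies `∇ log pY(y) = (a·S(y) − y)/b²`. -/
theorem tweedie_formula
    {n : ℕ} (a b : ℝ) (ha : 0 < a) (hb : 0 < b)
    (pX : EuclideanSpace ℝ (Fin n) → ℝ)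
    (hpXmeas : Measurable pX) (hpXnn : ∀ x, 0 ≤ pX x)
    (hpXint : ∫ x : EuclideanSpace ℝ (Fin n), pX x = 1) :
    let gauss : EuclideanSpace ℝ (Fin n) → EuclideanSpace ℝ (Fin n) → ℝ :=
      fun y x => (2 * π * b ^ 2) ^ (-(n : ℝ) / 2) *
        Real.exp (-‖y - a • x‖ ^ 2 / (2 * b ^ 2))
    let pY : EuclideanSpace ℝ (Fin n) → ℝ := fun y => ∫ x, pX x * gauss y x
    let S : EuclideanSpace ℝ (Fin n) → EuclideanSpace ℝ (Fin n) :=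
      fun y => (pY y)⁻¹ • ∫ x, (pX x * gauss y x) • x
    ∀ y, pY y ≠ 0 →
      gradient (fun y' => Real.log (pY y')) y = (b ^ 2)⁻¹ • (a • S y - y) := by
  intro gauss pY S y hy
  set c : ℝ := (2 * π * b ^ 2) ^ (-(n : ℝ) / 2) with hc
  have hc0 : 0 < c := Real.rpow_pos_of_pos (by positivity) _
  have hb2 : (0:ℝ) < b ^ 2 := by positivity
  -- pX is integrable
  have hpXL1 : Integrable pX := by
    by_contra h
    rw [integral_undef h] at hpXint
    exact one_ne_zero hpXint.symm
  -- basic facts about gauss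
  have hgauss_def : ∀ (y' x : EuclideanSpace ℝ (Fin n)), gauss y' x = c * Real.exp (-‖y' - a • x‖ ^ 2 / (2 * b ^ 2)) :=
    fun y' x => rfl
  have hg_nonneg : ∀ (y' x : EuclideanSpace ℝ (Fin n)), 0 ≤ gauss y' x := by
    intro y' x
    rw [hgauss_def]
    positivity
  have hg_le : ∀ (y' x : EuclideanSpace ℝ (Fin n)), gauss y' x ≤ c := by
    intro y' x
    rw [hgauss_def]
    have : Real.exp (-‖y' - a • x‖ ^ 2 / (2 * b ^ 2)) ≤ 1 := by
      apply Real.exp_le_one_iff.2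
      have h2 : -‖y' - a • x‖ ^ 2 / (2 * b ^ 2) = -(‖y' - a • x‖ ^ 2 / (2 * b ^ 2)) := by ring
      have h1 : 0 ≤ ‖y' - a • x‖ ^ 2 / (2 * b ^ 2) := by positivity
      linarith
    nlinarith
  have hg_key : ∀ (y' x : EuclideanSpace ℝ (Fin n)), gauss y' x * ‖y' - a • x‖ ≤ c * (2 * b) := by
    intro y' x
    rw [hgauss_def, mul_assoc]
    have := tweedie_exp_mul_le hb (norm_nonneg (y' - a • x))
    nlinarith
  -- continuity/measurability of gauss in x
  have hg_cont : ∀ y' : EuclideanSpace ℝ (Fin n), Continuous fun x : EuclideanSpace ℝ (Fin n) => gauss y' x := by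
    intro y'
    simp only [hgauss_def]
    fun_prop
  have hF_meas : ∀ y' : EuclideanSpace ℝ (Fin n), AEStronglyMeasurable (fun x => pX x * gauss y' x) volume :=
    fun y' => (hpXmeas.mul (hg_cont y').measurable).aestronglyMeasurable
  -- integrability of pX * gauss
  have hInt0 : ∀ y' : EuclideanSpace ℝ (Fin n), Integrable (fun x => pX x * gauss y' x) := by
    intro y'
    apply Integrable.mono' (hpXL1.const_mul c) (hF_meas y')
    filter_upwards with x
    rw [Real.norm_eq_abs, abs_of_nonneg (mul_nonneg (hpXnn x) (hg_nonneg y' x))]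
    calc pX x * gauss y' x ≤ pX x * c := mul_le_mul_of_nonneg_left (hg_le y' x) (hpXnn x)
      _ = c * pX x := mul_comm _ _
  -- the pointwise derivative
  have hderiv : ∀ (x y' : EuclideanSpace ℝ (Fin n)),
      HasFDerivAt (fun z => pX x * gauss z x)
        ((pX x * gauss y' x * (b ^ 2)⁻¹) • innerSL ℝ (a • x - y')) y' := by
    intro x y'
    have h1 : HasFDerivAt (fun z : EuclideanSpace ℝ (Fin n) => ‖z - a • x‖ ^ 2)
        (2 • innerSL ℝ (y' - a • x)) y' := by
      have := ((hasFDerivAt_id y').sub_const (a • x)).norm_sq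
      simpa using this
    have h2 : HasFDerivAt (fun z : EuclideanSpace ℝ (Fin n) => (-(2 * b ^ 2)⁻¹) * ‖z - a • x‖ ^ 2)
        ((-(2 * b ^ 2)⁻¹) • (2 • innerSL ℝ (y' - a • x))) y' := h1.const_mul _
    have h3 := ((h2.exp.const_mul c).const_mul (pX x))
    have heq : (fun z : EuclideanSpace ℝ (Fin n) => pX x * (c * Real.exp ((-(2 * b ^ 2)⁻¹) * ‖z - a • x‖ ^ 2)))
        = fun z => pX x * gauss z x := by
      funext z
      rw [hgauss_def]
      congr 1
      congr 1
      congr 1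
      ring
    rw [heq] at h3
    refine h3.congr_fderiv (Eq.symm ?_)
    ext w
    simp only [ContinuousLinearMap.smul_apply, innerSL_apply_apply,
      ContinuousLinearMap.coe_smul', Pi.smul_apply, smul_eq_mul]
    rw [hgauss_def]
    have hinner : (inner ℝ (a • x - y') w : ℝ) = -(inner ℝ (y' - a • x) w : ℝ) := by
      rw [← inner_neg_left]
      congr 1
      abel
    have hexp : Real.exp ((-(2 * b ^ 2)⁻¹) * ‖y' - a • x‖ ^ 2)
        = Real.exp (-‖y' - a • x‖ ^ 2 / (2 * b ^ 2)) := by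
      congr 1
      ring
    rw [hinner, hexp]
    ring
  -- the derivative integrand is integrable / measurable
  have hF'_meas : AEStronglyMeasurable
      (fun x : EuclideanSpace ℝ (Fin n) => (pX x * gauss y x * (b ^ 2)⁻¹) • innerSL ℝ (a • x - y)) volume := by
    apply AEStronglyMeasurable.fun_smul
    · exact ((hpXmeas.mul (hg_cont y).measurable).mul_const _).aestronglyMeasurable
    · exact (show Continuous (fun x : EuclideanSpace ℝ (Fin n) => innerSL ℝ (a • x - y)) by
        fun_prop).aestronglyMeasurable
  -- dominated derivative bound
  set bound : EuclideanSpace ℝ (Fin n) → ℝ := fun x => ((b ^ 2)⁻¹ * (c * (2 * b))) * pX x with hbound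
  have hbound_int : Integrable bound := hpXL1.const_mul _
  have h_bound : ∀ᵐ x ∂(volume : Measure (EuclideanSpace ℝ (Fin n))), ∀ y' ∈ Metric.ball y 1,
      ‖(pX x * gauss y' x * (b ^ 2)⁻¹) • innerSL ℝ (a • x - y')‖ ≤ bound x := by
    filter_upwards with x
    intro y' _
    refine le_trans (norm_smul_le (β := EuclideanSpace ℝ (Fin n) →L[ℝ] ℝ)
      (pX x * gauss y' x * (b ^ 2)⁻¹) (innerSL ℝ (a • x - y'))) ?_
    rw [innerSL_apply_norm, Real.norm_eq_abs,
      abs_of_nonneg (mul_nonneg (mul_nonneg (hpXnn x) (hg_nonneg y' x))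
        (by positivity : (0:ℝ) ≤ (b ^ 2)⁻¹))]
    have h1 : ‖a • x - y'‖ = ‖y' - a • x‖ := by rw [← norm_neg]; congr 1; abel
    rw [h1, hbound]
    have h2 := hg_key y' x
    have h3 := hpXnn x
    have h4 : gauss y' x * ‖y' - a • x‖ * (b ^ 2)⁻¹ ≤ c * (2 * b) * (b ^ 2)⁻¹ := by
      apply mul_le_mul_of_nonneg_right h2 (by positivity)
    nlinarith [mul_le_mul_of_nonneg_left h4 h3]
  -- differentiate under the integral sign
  have hpY_deriv : HasFDerivAt pY
      (∫ x, (pX x * gauss y x * (b ^ 2)⁻¹) • innerSL ℝ (a • x - y)) y := by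
    apply hasFDerivAt_integral_of_dominated_of_fderiv_le (Metric.ball_mem_nhds y one_pos)
      (Filter.Eventually.of_forall fun y' => hF_meas y') (hInt0 y) hF'_meas h_bound hbound_int
    filter_upwards with x
    intro y' _
    exact hderiv x y'
  -- integrability of the vector-valued integrands
  have hInt1 : Integrable (fun x : EuclideanSpace ℝ (Fin n) => (pX x * gauss y x) • x) := by
    apply Integrable.mono' (hpXL1.const_mul (a⁻¹ * (c * (2 * b) + c * ‖y‖)))
    · exact ((hpXmeas.mul (hg_cont y).measurable).aestronglyMeasurable.smul
        aestronglyMeasurable_id)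
    · filter_upwards with x
      rw [norm_smul, Real.norm_eq_abs,
        abs_of_nonneg (mul_nonneg (hpXnn x) (hg_nonneg y x))]
      have h1 : ‖x‖ ≤ a⁻¹ * (‖y - a • x‖ + ‖y‖) := by
        have : ‖a • x‖ ≤ ‖y - a • x‖ + ‖y‖ := by
          calc ‖a • x‖ = ‖(a • x - y) + y‖ := by congr 1; abel
            _ ≤ ‖a • x - y‖ + ‖y‖ := norm_add_le _ _
            _ = ‖y - a • x‖ + ‖y‖ := by rw [← norm_neg (a • x - y)]; congr 2; abel
        rw [norm_smul, Real.norm_eq_abs, abs_of_pos ha] at this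
        have h5 : ‖x‖ ≤ (‖y - a • x‖ + ‖y‖) / a := by
          rw [le_div_iff₀' ha]; exact this
        calc ‖x‖ ≤ (‖y - a • x‖ + ‖y‖) / a := h5
          _ = a⁻¹ * (‖y - a • x‖ + ‖y‖) := by rw [div_eq_inv_mul]
      have h2 : gauss y x * ‖x‖ ≤ a⁻¹ * (c * (2 * b) + c * ‖y‖) := by
        calc gauss y x * ‖x‖ ≤ gauss y x * (a⁻¹ * (‖y - a • x‖ + ‖y‖)) :=
              mul_le_mul_of_nonneg_left h1 (hg_nonneg y x)
          _ = a⁻¹ * (gauss y x * ‖y - a • x‖ + gauss y x * ‖y‖) := by ring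
          _ ≤ a⁻¹ * (c * (2 * b) + c * ‖y‖) := by
              apply mul_le_mul_of_nonneg_left _ (by positivity)
              have := hg_key y x
              have := mul_le_mul_of_nonneg_right (hg_le y x) (norm_nonneg y)
              linarith
      calc pX x * gauss y x * ‖x‖ = pX x * (gauss y x * ‖x‖) := by ring
        _ ≤ pX x * (a⁻¹ * (c * (2 * b) + c * ‖y‖)) :=
            mul_le_mul_of_nonneg_left h2 (hpXnn x)
        _ = a⁻¹ * (c * (2 * b) + c * ‖y‖) * pX x := by ring
  have hInt2 : Integrable (fun x : EuclideanSpace ℝ (Fin n) => (pX x * gauss y x * (b ^ 2)⁻¹) • (a • x - y)) := by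
    apply Integrable.mono' hbound_int
    · exact (((hpXmeas.mul (hg_cont y).measurable).mul_const _).aestronglyMeasurable.fun_smul
        ((show Continuous (fun x : EuclideanSpace ℝ (Fin n) => a • x - y) by
          fun_prop).aestronglyMeasurable))
    · filter_upwards with x
      rw [norm_smul, Real.norm_eq_abs,
        abs_of_nonneg (mul_nonneg (mul_nonneg (hpXnn x) (hg_nonneg y x))
          (by positivity : (0:ℝ) ≤ (b ^ 2)⁻¹))]
      have h1 : ‖a • x - y‖ = ‖y - a • x‖ := by rw [← norm_neg]; congr 1; abel
      rw [h1, hbound]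
      have h2 := hg_key y x
      have h3 := hpXnn x
      have h4 : gauss y x * ‖y - a • x‖ * (b ^ 2)⁻¹ ≤ c * (2 * b) * (b ^ 2)⁻¹ :=
        mul_le_mul_of_nonneg_right h2 (by positivity)
      nlinarith [mul_le_mul_of_nonneg_left h4 h3]
  -- identify the derivative with an inner product against a vector
  set v : EuclideanSpace ℝ (Fin n) := ∫ x, (pX x * gauss y x * (b ^ 2)⁻¹) • (a • x - y) with hv
  have hderiv_eq : (∫ x, (pX x * gauss y x * (b ^ 2)⁻¹) • innerSL ℝ (a • x - y))
      = innerSL ℝ v := by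
    have h1 : (fun x : EuclideanSpace ℝ (Fin n) => (pX x * gauss y x * (b ^ 2)⁻¹) • innerSL ℝ (a • x - y))
        = fun x => innerSL ℝ ((pX x * gauss y x * (b ^ 2)⁻¹) • (a • x - y)) := by
      funext x
      rw [_root_.map_smul]
    rw [h1, ContinuousLinearMap.integral_comp_comm (innerSL ℝ) hInt2]
  rw [hderiv_eq] at hpY_deriv
  -- gradient of log pY
  have hlog : HasFDerivAt (fun y' => Real.log (pY y')) (innerSL ℝ ((pY y)⁻¹ • v)) y := by
    have h := (Real.hasDerivAt_log hy).comp_hasFDerivAt y hpY_deriv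
    rw [_root_.map_smul]
    exact h
  have hgrad : gradient (fun y' => Real.log (pY y')) y = (pY y)⁻¹ • v := by
    apply HasGradientAt.gradient
    rw [hasGradientAt_iff_hasFDerivAt]
    have htd : (InnerProductSpace.toDual ℝ (EuclideanSpace ℝ (Fin n))) ((pY y)⁻¹ • v)
        = innerSL ℝ ((pY y)⁻¹ • v) := by
      ext w
      simp [InnerProductSpace.toDual]
    rw [htd]
    exact hlog
  rw [hgrad]
  -- final algebra
  have hint_eq : v = (b ^ 2)⁻¹ • (a • (∫ x, (pX x * gauss y x) • x) - pY y • y) := by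
    rw [hv]
    have h1 : (fun x : EuclideanSpace ℝ (Fin n) => (pX x * gauss y x * (b ^ 2)⁻¹) • (a • x - y))
        = fun x => (b ^ 2)⁻¹ • (a • ((pX x * gauss y x) • x) - (pX x * gauss y x) • y) := by
      funext x
      rw [smul_sub, smul_sub]
      congr 1
      · rw [smul_comm a, ← mul_smul, ← mul_smul, ← mul_smul]
        ring_nf
      · rw [← mul_smul]
        ring_nf
    rw [h1, integral_smul]
    congr 1
    have hInt1a : Integrable (fun x : EuclideanSpace ℝ (Fin n) =>
        a • ((pX x * gauss y x) • x)) := hInt1.smul a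
    rw [integral_sub hInt1a ((hInt0 y).smul_const y), integral_smul,
      integral_smul_const]
  rw [hint_eq]
  have hSdef : S y = (pY y)⁻¹ • ∫ x, (pX x * gauss y x) • x := rfl
  rw [smul_comm, smul_sub, smul_smul, smul_smul, inv_mul_cancel₀ hy, one_smul, hSdef,
    smul_smul, mul_comm ((pY y)⁻¹) a]
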